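/- Let (Γ,w) be a stable weighted graph of genus g ≥ 2 which is d-general, and let S be a nonempty set of bridges of Γ. Then the blow-up Γ̂_S admits no strictly balanced multidegree of total degree d, i.e. B_d(Γ̂_S) = ∅. -/

import Mathlib

open Finset

noncomputable section
open scoped Classical

variable {V : Type} [Fintype V] [DecidableEq V]

/-- The simple graph underlying a multigraph with multiplicity function `k`:
`u` and `v` are adjacent iff `u ≠ v` and some edge joins them. -/
def graphOf (k : V → V → ℕ) : SimpleGraph V where
  Adj u v := u ≠ v ∧ (0 < k u v ∨ 0 < k v u)
  symm := ⟨fun u v h => ⟨h.1.symm, h.2.symm⟩⟩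
  loopless := ⟨fun v h => h.1 rfl⟩

/-- The number of edges of a multigraph: loops plus half the ordered count. -/
def numEdges (k : V → V → ℕ) : ℕ :=
  (∑ v, k v v) + (∑ u, ∑ v ∈ Finset.univ.erase u, k u v) / 2

/-- The genus of a weighted graph: `∑ w(v) + b₁`, with `b₁ = #E - #V + 1`. -/
def genus (k : V → V → ℕ) (w : V → ℕ) : ℤ :=
  (∑ v, (w v : ℤ)) + ((numEdges k : ℤ) - (Fintype.card V : ℤ) + 1)

/-- Stability: connected, and each weight-zero vertex has valency at least 3. -/
def IsStable (k : V → V → ℕ) (w : V → ℕ) : Prop :=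
  (graphOf k).Connected ∧
    ∀ v, w v = 0 → 3 ≤ 2 * k v v + ∑ u ∈ Finset.univ.erase v, k u v

/-- `δ_A`: the number of edges joining `A` to its complement. -/
def deltaA (k : V → V → ℕ) (A : Finset V) : ℤ :=
  ∑ u ∈ A, ∑ v ∈ Aᶜ, (k u v : ℤ)

/-- `w_A = Σ_{v∈A} (2w(v) − 2 + 2k(v,v) + Σ_{u≠v} k(u,v))`. -/
def wA (k : V → V → ℕ) (w : V → ℕ) (A : Finset V) : ℤ :=
  ∑ v ∈ A, (2 * (w v : ℤ) - 2 + 2 * (k v v : ℤ) + ∑ u ∈ Finset.univ.erase v, (k u v : ℤ))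

/-- `d_A`: the total degree of a multidegree on the subset `A`. -/
def degA (d : V → ℤ) (A : Finset V) : ℤ := ∑ v ∈ A, d v

/-- `m_A(d) = d·w_A/(2g−2) − δ_A/2 ∈ ℚ`. -/
def mA (k : V → V → ℕ) (w : V → ℕ) (D : ℤ) (A : Finset V) : ℚ :=
  (D : ℚ) * (wA k w A : ℚ) / ((2 * genus k w - 2 : ℤ) : ℚ) - (deltaA k A : ℚ) / 2

/-- A balanced multidegree of total degree `D`. -/
def IsBalanced (k : V → V → ℕ) (w : V → ℕ) (D : ℤ) (d : V → ℤ) : Prop :=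
  degA d Finset.univ = D ∧ ∀ A : Finset V, mA k w D A ≤ (degA d A : ℚ)

/-- A strictly balanced multidegree of total degree `D`. -/
def IsStrictlyBalanced (k : V → V → ℕ) (w : V → ℕ) (D : ℤ) (d : V → ℤ) : Prop :=
  IsBalanced k w D d ∧
    ∀ A : Finset V, A ≠ ∅ → A ≠ Finset.univ → mA k w D A < (degA d A : ℚ)

/-- `(Γ,w)` is `d`-general if every balanced multidegree of total degree `d`
is strictly balanced. -/
def IsDGeneral (k : V → V → ℕ) (w : V → ℕ) (D : ℤ) : Prop :=
  ∀ d : V → ℤ, IsBalanced k w D d → IsStrictlyBalanced k w D d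

/-- The generator `c_v` of the lattice `Λ`. -/
def cvec (k : V → V → ℕ) (v : V) : V → ℤ := fun u =>
  if u = v then -(∑ x ∈ Finset.univ.erase v, (k x v : ℤ)) else (k u v : ℤ)

/-- The lattice `Λ ⊆ ℤ^V` generated by the `c_v`. -/
def Lambda (k : V → V → ℕ) : AddSubgroup (V → ℤ) :=
  AddSubgroup.closure (Set.range (cvec k))

/-- The total-degree homomorphism `ℤ^V → ℤ`. -/
def sumHom (V : Type) [Fintype V] : (V → ℤ) →+ ℤ :=
  { toFun := fun d => ∑ v, d v
    map_zero' := by simp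
    map_add' := fun a b => by simp [Finset.sum_add_distrib] }

/-- `Z = {d ∈ ℤ^V : Σ_v d(v) = 0}`. -/
def Zsub (V : Type) [Fintype V] : AddSubgroup (V → ℤ) := (sumHom V).ker

/-- Remove the edge(s) joining `a` and `b` from the multigraph. -/
def removeEdge (k : V → V → ℕ) (a b : V) : V → V → ℕ := fun u v =>
  if (u = a ∧ v = b) ∨ (u = b ∧ v = a) then 0 else k u v

/-- `a`–`b` is a bridge: a single non-loop edge whose removal disconnects the graph. -/
def IsBridge (k : V → V → ℕ) (a b : V) : Prop :=
  a ≠ b ∧ k a b = 1 ∧ ¬ (graphOf (removeEdge k a b)).Connected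

/-- `A` induces a connected sub-multigraph. -/
def IsConnectedSubset (k : V → V → ℕ) (A : Finset V) : Prop :=
  ((graphOf k).induce (A : Set V)).Connected

/-- The equivalence relation `≈` on `V` generated by bridges. -/
def contractSetoid (k : V → V → ℕ) : Setoid V :=
  ⟨Relation.EqvGen (fun u v => IsBridge k u v), Relation.EqvGen.is_equivalence _⟩

/-- The vertex set `V² = V/≈` of the contracted graph `Γ²`. -/
def V2 (k : V → V → ℕ) : Type := Quotient (contractSetoid k)

instance (k : V → V → ℕ) : Finite (V2 k) := Quotient.finite _

instance (k : V → V → ℕ) : Fintype (V2 k) := Fintype.ofFinite _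

/-- The fiber of the quotient map `φ : V → V²` over a class `c`. -/
def fiber (k : V → V → ℕ) (c : V2 k) : Finset V :=
  Finset.univ.filter (fun v => Quotient.mk (contractSetoid k) v = c)

/-- The multiplicity function `k²` of the contracted graph `Γ²`. -/
def k2 (k : V → V → ℕ) : V2 k → V2 k → ℕ := fun c c' =>
  if c = c' then
    (∑ v ∈ fiber k c, k v v) +
      (∑ u ∈ fiber k c, ∑ v ∈ (fiber k c).erase u,
        if IsBridge k u v then 0 else k u v) / 2
  else ∑ u ∈ fiber k c, ∑ v ∈ fiber k c', k u v

/-- The weight function `w²` of the contracted weighted graph `(Γ²,w²)`. -/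
def w2 (k : V → V → ℕ) (w : V → ℕ) : V2 k → ℕ := fun c => ∑ v ∈ fiber k c, w v

/-- The pushforward `α(d)` of a multidegree to the contracted graph. -/
def alphaMap (k : V → V → ℕ) (d : V → ℤ) : V2 k → ℤ := fun c => ∑ v ∈ fiber k c, d v

/-- The setoid on multidegrees of total degree `D`: two are equivalent if their
difference lies in `Λ`; the quotient is `Δ^d`. -/
def degSetoid (k : V → V → ℕ) (D : ℤ) : Setoid {d : V → ℤ // (∑ v, d v) = D} :=
  ⟨fun a b => (a : V → ℤ) - (b : V → ℤ) ∈ Lambda k, by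
    constructor
    · intro a; simpa using (Lambda k).zero_mem
    · intro a b h; have h2 := (Lambda k).neg_mem h; rwa [neg_sub] at h2
    · intro a b c h1 h2
      have h3 := (Lambda k).add_mem h1 h2
      rwa [sub_add_sub_cancel] at h3⟩

/-- Number of edges of the sub-multigraph induced on `A`. -/
def numEdgesIn (k : V → V → ℕ) (A : Finset V) : ℕ :=
  (∑ v ∈ A, k v v) + (∑ u ∈ A, ∑ v ∈ A.erase u, k u v) / 2

/-- Blow-up of a multigraph at the single bridge `a`–`b`: one exceptional
vertex is inserted in the middle of the bridge. -/
def blowK (k : V → V → ℕ) (a b : V) : (V ⊕ Unit) → (V ⊕ Unit) → ℕ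
  | Sum.inl u, Sum.inl v => if (u = a ∧ v = b) ∨ (u = b ∧ v = a) then 0 else k u v
  | Sum.inl u, Sum.inr _ => if u = a ∨ u = b then 1 else 0
  | Sum.inr _, Sum.inl v => if v = a ∨ v = b then 1 else 0
  | Sum.inr _, Sum.inr _ => 0

/-- Weight function of the blow-up at one bridge: exceptional vertex has weight 0. -/
def blowW (w : V → ℕ) : V ⊕ Unit → ℕ
  | Sum.inl v => w v
  | Sum.inr _ => 0

/-- Blow-up of a multigraph at a set `S` of bridges (given as ordered pairs):
one exceptional vertex is inserted in the middle of each bridge of `S`. -/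
def blowKS (k : V → V → ℕ) (S : Finset (V × V)) :
    (V ⊕ {p : V × V // p ∈ S}) → (V ⊕ {p : V × V // p ∈ S}) → ℕ
  | Sum.inl u, Sum.inl v => if (u, v) ∈ S ∨ (v, u) ∈ S then 0 else k u v
  | Sum.inl u, Sum.inr e => if u = e.1.1 ∨ u = e.1.2 then 1 else 0
  | Sum.inr e, Sum.inl v => if v = e.1.1 ∨ v = e.1.2 then 1 else 0
  | Sum.inr _, Sum.inr _ => 0

/-- Weight function of the blow-up at a set of bridges. -/
def blowWS (w : V → ℕ) (S : Finset (V × V)) : (V ⊕ {p : V × V // p ∈ S}) → ℕ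
  | Sum.inl v => w v
  | Sum.inr _ => 0

/-- Strictly balanced multidegree of total degree `D` on the blow-up `Γ̂_S`:
balanced (with degree 1 on each exceptional vertex), and the inequality is
strict for every proper nonempty `A` such that some edge between `A` and its
complement has no exceptional endpoint. -/
def IsStrictlyBalancedBlowS (k : V → V → ℕ) (w : V → ℕ) (S : Finset (V × V)) (D : ℤ)
    (dh : (V ⊕ {p : V × V // p ∈ S}) → ℤ) : Prop :=
  IsBalanced (blowKS k S) (blowWS w S) D dh ∧
    (∀ e : {p : V × V // p ∈ S}, dh (Sum.inr e) = 1) ∧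
    ∀ A : Finset (V ⊕ {p : V × V // p ∈ S}), A ≠ ∅ → A ≠ Finset.univ →
      (∃ u v : V, Sum.inl u ∈ A ∧ Sum.inl v ∉ A ∧ 0 < blowKS k S (Sum.inl u) (Sum.inl v)) →
      mA (blowKS k S) (blowWS w S) D A < (degA dh A : ℚ)

/-- Multiplicity function of the vine graph: two vertices joined by `δ` edges,
no loops. -/
def vineK (δ : ℕ) : Fin 2 → Fin 2 → ℕ := fun u v => if u = v then 0 else δ

/-- Weight function of the vine graph with weights `g₁, g₂`. -/
def vineW (g1 g2 : ℕ) : Fin 2 → ℕ := fun v => if v = 0 then g1 else g2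

/-- The data of a stable vine graph of genus `g` with weights `g₁, g₂` and `δ` edges. -/
def StableVine (g : ℤ) (g1 g2 δ : ℕ) : Prop :=
  2 ≤ δ ∧ ((g1 = 0 ∨ g2 = 0) → 3 ≤ δ) ∧ (g1 : ℤ) + (g2 : ℤ) + (δ : ℤ) - 1 = g

set_option linter.unusedSectionVars false

lemma aux_reach_mono (G G' : SimpleGraph V) (h : ∀ u v, G.Adj u v → G'.Reachable u v)
    {u v : V} (huv : G.Reachable u v) : G'.Reachable u v := by
  obtain ⟨p⟩ := huv
  induction p with
  | nil => exact SimpleGraph.Reachable.refl _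
  | cons hadj p ih => exact (h _ _ hadj).trans ih

lemma aux_offdiag_even (k : V → V → ℕ) (hsym : ∀ u v, k u v = k v u) :
    2 ∣ ∑ u : V, ∑ v ∈ Finset.univ.erase u, k u v := by
  classical
  letI : LinearOrder V := LinearOrder.lift' (Fintype.equivFin V) (Fintype.equivFin V).injective
  have h1 : ∑ u : V, ∑ v ∈ Finset.univ.erase u, k u v
      = ∑ p ∈ (Finset.univ ×ˢ Finset.univ).filter (fun p : V × V => p.2 ≠ p.1), k p.1 p.2 := by
    have hp := Finset.sum_product' (s := (Finset.univ : Finset V)) (t := Finset.univ)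
      (f := fun u v => if v ≠ u then k u v else 0)
    rw [Finset.sum_filter, hp]
    refine Finset.sum_congr rfl fun u _ => ?_
    rw [← Finset.filter_ne' Finset.univ u, Finset.sum_filter]
  rw [h1, ← Finset.sum_filter_add_sum_filter_not _ (fun p : V × V => p.1 < p.2)]
  have h2 : ∑ p ∈ ((Finset.univ ×ˢ Finset.univ).filter (fun p : V × V => p.2 ≠ p.1)).filter
      (fun p : V × V => ¬ p.1 < p.2), k p.1 p.2
      = ∑ p ∈ ((Finset.univ ×ˢ Finset.univ).filter (fun p : V × V => p.2 ≠ p.1)).filter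
      (fun p : V × V => p.1 < p.2), k p.1 p.2 := by
    refine Finset.sum_nbij' (fun p => (p.2, p.1)) (fun p => (p.2, p.1)) ?_ ?_ ?_ ?_ ?_
    · intro p hp
      simp only [Finset.mem_filter, Finset.mem_product] at hp ⊢
      exact ⟨⟨⟨Finset.mem_univ _, Finset.mem_univ _⟩, hp.1.2.symm⟩,
        lt_of_le_of_ne (not_lt.1 hp.2) hp.1.2⟩
    · intro p hp
      simp only [Finset.mem_filter, Finset.mem_product] at hp ⊢
      exact ⟨⟨⟨Finset.mem_univ _, Finset.mem_univ _⟩, hp.1.2.symm⟩, not_lt.2 (le_of_lt hp.2)⟩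
    · intro p _; rfl
    · intro p _; rfl
    · intro p _; exact hsym p.1 p.2
  rw [h2]
  exact ⟨_, (two_mul _).symm⟩

-- blow-up context
section Hat
variable (S : Finset (V × V))

def hatS (σ : {p : V × V // p ∈ S} → V) (B : Finset V) :
    Finset (V ⊕ {p : V × V // p ∈ S}) :=
  Finset.univ.filter (fun x => Sum.elim (fun v => v ∈ B) (fun e => σ e ∈ B) x)

lemma compl_hatS (σ : {p : V × V // p ∈ S} → V) (B : Finset V) :
    (hatS S σ B)ᶜ = hatS S σ Bᶜ := by
  ext x; cases x <;> simp [hatS]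

lemma hatS_univ (σ : {p : V × V // p ∈ S} → V) : hatS S σ Finset.univ = Finset.univ := by
  ext x; cases x <;> simp [hatS]

lemma sum_hatS {M : Type} [AddCommMonoid M] (σ : {p : V × V // p ∈ S} → V) (B : Finset V)
    (f : V ⊕ {p : V × V // p ∈ S} → M) :
    ∑ x ∈ hatS S σ B, f x = (∑ v ∈ B, f (Sum.inl v)) +
      ∑ e : {p : V × V // p ∈ S}, if σ e ∈ B then f (Sum.inr e) else 0 := by
  rw [hatS, Finset.sum_filter, Fintype.sum_sum_type]
  simp only [Sum.elim_inl, Sum.elim_inr]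
  congr 1
  rw [← Finset.sum_add_sum_compl B]
  exact Eq.trans (congrArg₂ (· + ·) (Finset.sum_congr rfl fun x hx => if_pos hx)
    (Finset.sum_eq_zero fun x hx => if_neg (Finset.mem_compl.1 hx))) (add_zero _)
  exact Finset.sum_congr rfl fun x _ => by split_ifs <;> simp_all

-- indicator of endpoints summed over a set
lemma sum_ind_endpoints (B : Finset V) (x y : V) (hxy : x ≠ y) :
    ∑ u ∈ B, (if u = x ∨ u = y then (1 : ℤ) else 0)
      = (if x ∈ B then (1 : ℤ) else 0) + (if y ∈ B then 1 else 0) := by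
  have h : ∀ u ∈ B, (if u = x ∨ u = y then (1 : ℤ) else 0)
      = (if u = x then (1:ℤ) else 0) + (if u = y then 1 else 0) := by
    intro u _
    by_cases h1 : u = x <;> by_cases h2 : u = y <;> simp_all
  rw [Finset.sum_congr rfl h, Finset.sum_add_distrib]
  simp [Finset.sum_ite_eq']

lemma sum_ind_endpoints_univ (x y : V) (hxy : x ≠ y) :
    ∑ u : V, (if u = x ∨ u = y then (1 : ℤ) else 0) = 2 := by
  rw [sum_ind_endpoints Finset.univ x y hxy]; simp

end Hat


section CountAux
variable (S : Finset (V × V))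

lemma helper_pair (A C : Finset V) (p : V × V) :
    ∑ u ∈ A, ∑ v ∈ C, (if p = (u, v) then (1:ℤ) else 0)
      = if p.1 ∈ A ∧ p.2 ∈ C then 1 else 0 := by
  have h : ∀ u v, (if p = (u,v) then (1:ℤ) else 0)
      = (if u = p.1 then (1:ℤ) else 0) * (if v = p.2 then 1 else 0) := by
    intro u v
    by_cases h1 : u = p.1 <;> by_cases h2 : v = p.2 <;>
      simp [Prod.ext_iff, h1, h2, eq_comm]
  simp only [h]
  rw [← Finset.sum_mul_sum]
  rw [Finset.sum_ite_eq' A p.1 (fun _ => (1:ℤ)), Finset.sum_ite_eq' C p.2 (fun _ => (1:ℤ))]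
  by_cases h1 : p.1 ∈ A <;> by_cases h2 : p.2 ∈ C <;> simp [h1, h2]

lemma count_pairs (A C : Finset V) :
    ∑ u ∈ A, ∑ v ∈ C, (if (u,v) ∈ S then (1:ℤ) else 0)
      = ∑ e : {p : V × V // p ∈ S}, (if e.1.1 ∈ A ∧ e.1.2 ∈ C then (1:ℤ) else 0) := by
  have h1 : ∀ u v : V, (if (u,v) ∈ S then (1:ℤ) else 0)
      = ∑ p ∈ S, (if p = (u,v) then (1:ℤ) else 0) := by
    intro u v
    rw [Finset.sum_ite_eq' S (u,v) (fun _ => (1:ℤ))]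
  simp only [h1]
  rw [Finset.sum_coe_sort S (fun p => if p.1 ∈ A ∧ p.2 ∈ C then (1:ℤ) else 0)]
  have h2 : ∀ u ∈ A, (∑ v ∈ C, ∑ p ∈ S, (if p = (u,v) then (1:ℤ) else 0))
      = ∑ p ∈ S, ∑ v ∈ C, (if p = (u,v) then (1:ℤ) else 0) := fun u _ => Finset.sum_comm
  rw [Finset.sum_congr rfl h2, Finset.sum_comm]
  exact Finset.sum_congr rfl (fun p _ => helper_pair A C p)

lemma count_cross_at (hne : ∀ p ∈ S, p.1 ≠ p.2) (hor : ∀ p ∈ S, (p.2, p.1) ∉ S) (v : V) :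
    ∑ u : V, (if (u, v) ∈ S ∨ (v, u) ∈ S then (1:ℤ) else 0)
      = ∑ e : {p : V × V // p ∈ S}, (if v = e.1.1 ∨ v = e.1.2 then (1:ℤ) else 0) := by
  have hL : ∀ u : V, (if (u,v) ∈ S ∨ (v,u) ∈ S then (1:ℤ) else 0)
      = (if (u,v) ∈ S then (1:ℤ) else 0) + (if (v,u) ∈ S then 1 else 0) := by
    intro u
    by_cases h1 : (u,v) ∈ S
    · have h2 : (v,u) ∉ S := hor _ h1
      simp [h1, h2]
    · by_cases h2 : (v,u) ∈ S <;> simp [h1, h2]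
  have hR : ∀ e : {p : V × V // p ∈ S}, (if v = e.1.1 ∨ v = e.1.2 then (1:ℤ) else 0)
      = (if v = e.1.2 then (1:ℤ) else 0) + (if v = e.1.1 then 1 else 0) := by
    intro e
    have hne' : (↑e : V × V).1 ≠ (↑e : V × V).2 := hne _ e.2
    by_cases h1 : v = e.1.1 <;> by_cases h2 : v = e.1.2
    · exact absurd (h1.symm.trans h2) hne'
    · simp only [h1, h2]; simp [hne']
    · simp only [h1, h2]; simp [Ne.symm hne']
    · simp [h1, h2]
  simp only [hL, hR]
  rw [Finset.sum_add_distrib, Finset.sum_add_distrib]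
  congr 1
  · -- ∑ u, [(u,v) ∈ S] = ∑ e, [v = e.1.2]
    have := count_pairs S Finset.univ ({v} : Finset V)
    simp only [Finset.sum_singleton, Finset.mem_univ, true_and, Finset.mem_singleton] at this
    rw [this]
    exact Finset.sum_congr rfl fun e _ => by by_cases h : v = e.1.2 <;> simp [h, eq_comm]
  · -- ∑ u, [(v,u) ∈ S] = ∑ e, [v = e.1.1]
    have := count_pairs S ({v} : Finset V) Finset.univ
    simp only [Finset.sum_singleton, Finset.mem_univ, and_true, Finset.mem_singleton] at this
    rw [this]
    exact Finset.sum_congr rfl fun e _ => by by_cases h : v = e.1.1 <;> simp [h, eq_comm]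

end CountAux


section BlowAux
variable (k : V → V → ℕ) (w : V → ℕ) (S : Finset (V × V))

lemma blow_inl_inl (u v : V) : blowKS k S (Sum.inl u) (Sum.inl v)
    = if (u, v) ∈ S ∨ (v, u) ∈ S then 0 else k u v := rfl

lemma blow_inl_inr (u : V) (e : {p : V × V // p ∈ S}) : blowKS k S (Sum.inl u) (Sum.inr e)
    = if u = e.1.1 ∨ u = e.1.2 then 1 else 0 := rfl

lemma blow_inr_inl (e : {p : V × V // p ∈ S}) (v : V) : blowKS k S (Sum.inr e) (Sum.inl v)
    = if v = e.1.1 ∨ v = e.1.2 then 1 else 0 := rfl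

lemma blow_inr_inr (e e' : {p : V × V // p ∈ S}) : blowKS k S (Sum.inr e) (Sum.inr e') = 0 := rfl

lemma blow_loop (hbrne : ∀ p ∈ S, p.1 ≠ p.2) (v : V) :
    blowKS k S (Sum.inl v) (Sum.inl v) = k v v := by
  rw [blow_inl_inl, if_neg]
  rintro (h | h) <;> exact hbrne _ h rfl

lemma blow_inl_inl_cast (hsym : ∀ u v, k u v = k v u) (hone : ∀ p ∈ S, k p.1 p.2 = 1) (u v : V) :
    (blowKS k S (Sum.inl u) (Sum.inl v) : ℤ)
      = (k u v : ℤ) - (if (u, v) ∈ S ∨ (v, u) ∈ S then 1 else 0) := by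
  rw [blow_inl_inl]
  by_cases h : (u, v) ∈ S ∨ (v, u) ∈ S
  · have h1 : k u v = 1 := by
      rcases h with h | h
      · exact hone _ h
      · rw [hsym]; exact hone _ h
    simp [h, h1]
  · simp [h]

lemma blow_inl_inr_cast (u : V) (e : {p : V × V // p ∈ S}) :
    (blowKS k S (Sum.inl u) (Sum.inr e) : ℤ) = if u = e.1.1 ∨ u = e.1.2 then 1 else 0 := by
  rw [blow_inl_inr]; split_ifs <;> rfl

lemma blow_inr_inl_cast (e : {p : V × V // p ∈ S}) (v : V) :
    (blowKS k S (Sum.inr e) (Sum.inl v) : ℤ) = if v = e.1.1 ∨ v = e.1.2 then 1 else 0 := by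
  rw [blow_inr_inl]; split_ifs <;> rfl

lemma blow_nbr_sum (hsym : ∀ u v, k u v = k v u) (hbrne : ∀ p ∈ S, p.1 ≠ p.2)
    (hone : ∀ p ∈ S, k p.1 p.2 = 1) (hor : ∀ p ∈ S, (p.2, p.1) ∉ S) (v : V) :
    ∑ y : V ⊕ {p : V × V // p ∈ S}, (blowKS k S y (Sum.inl v) : ℤ) = ∑ u : V, (k u v : ℤ) := by
  rw [Fintype.sum_sum_type]
  have h1 : ∀ u : V, (blowKS k S (Sum.inl u) (Sum.inl v) : ℤ)
      = (k u v : ℤ) - (if (u, v) ∈ S ∨ (v, u) ∈ S then 1 else 0) :=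
    fun u => blow_inl_inl_cast k S hsym hone u v
  simp only [h1, blow_inr_inl_cast, Finset.sum_sub_distrib]
  rw [count_cross_at S hbrne hor v]
  ring

lemma blow_nbr_sum_fst (hsym : ∀ u v, k u v = k v u) (hbrne : ∀ p ∈ S, p.1 ≠ p.2)
    (hone : ∀ p ∈ S, k p.1 p.2 = 1) (hor : ∀ p ∈ S, (p.2, p.1) ∉ S) (u : V) :
    ∑ y : V ⊕ {p : V × V // p ∈ S}, (blowKS k S (Sum.inl u) y : ℤ) = ∑ v : V, (k u v : ℤ) := by
  rw [Fintype.sum_sum_type]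
  have h1 : ∀ v : V, (blowKS k S (Sum.inl u) (Sum.inl v) : ℤ)
      = (k u v : ℤ) - (if (v, u) ∈ S ∨ (u, v) ∈ S then 1 else 0) := by
    intro v
    rw [blow_inl_inl_cast k S hsym hone u v]
    congr 1
    exact if_congr or_comm rfl rfl
  simp only [h1, blow_inl_inr_cast, Finset.sum_sub_distrib]
  rw [count_cross_at S hbrne hor u]
  ring

lemma blow_nbr_sum_erase (hsym : ∀ u v, k u v = k v u) (hbrne : ∀ p ∈ S, p.1 ≠ p.2)
    (hone : ∀ p ∈ S, k p.1 p.2 = 1) (hor : ∀ p ∈ S, (p.2, p.1) ∉ S) (v : V) :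
    ∑ y ∈ Finset.univ.erase (Sum.inl v : V ⊕ {p : V × V // p ∈ S}), (blowKS k S y (Sum.inl v) : ℤ)
      = ∑ u ∈ Finset.univ.erase v, (k u v : ℤ) := by
  have h1 := Finset.sum_erase_add Finset.univ
    (fun y => (blowKS k S y (Sum.inl v) : ℤ)) (Finset.mem_univ (Sum.inl v))
  have h2 := Finset.sum_erase_add Finset.univ (fun u => (k u v : ℤ)) (Finset.mem_univ v)
  have h3 := blow_nbr_sum k S hsym hbrne hone hor v
  have h4 := blow_loop k S hbrne v
  simp only [h4] at h1
  have h5 : (blowKS k S (Sum.inl v) (Sum.inl v) : ℤ) = (k v v : ℤ) := by rw [h4]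
  linarith [h1, h2, h3, h5]

lemma exc_nbr_sum (hbrne : ∀ p ∈ S, p.1 ≠ p.2) (e : {p : V × V // p ∈ S}) :
    ∑ y ∈ Finset.univ.erase (Sum.inr e : V ⊕ {p : V × V // p ∈ S}), (blowKS k S y (Sum.inr e) : ℤ)
      = 2 := by
  have h1 := Finset.sum_erase_add Finset.univ
    (fun y => (blowKS k S y (Sum.inr e) : ℤ)) (Finset.mem_univ (Sum.inr e))
  have h2 : ∑ y : V ⊕ {p : V × V // p ∈ S}, (blowKS k S y (Sum.inr e) : ℤ) = 2 := by
    rw [Fintype.sum_sum_type]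
    simp only [blow_inl_inr_cast, blow_inr_inr]
    rw [sum_ind_endpoints_univ e.1.1 e.1.2 (hbrne _ e.2)]
    simp
  have h3 : (blowKS k S (Sum.inr e) (Sum.inr e) : ℤ) = 0 := by rw [blow_inr_inr]; rfl
  rw [h2] at h1
  linarith [h1, h3]

lemma wA_hat (hsym : ∀ u v, k u v = k v u) (hbrne : ∀ p ∈ S, p.1 ≠ p.2)
    (hone : ∀ p ∈ S, k p.1 p.2 = 1) (hor : ∀ p ∈ S, (p.2, p.1) ∉ S)
    (σ : {p : V × V // p ∈ S} → V) (B : Finset V) :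
    wA (blowKS k S) (blowWS w S) (hatS S σ B) = wA k w B := by
  rw [wA, sum_hatS, wA]
  have hzero : ∀ e : {p : V × V // p ∈ S},
      (if σ e ∈ B then (2 * ((blowWS w S (Sum.inr e)) : ℤ) - 2
        + 2 * ((blowKS k S (Sum.inr e) (Sum.inr e)) : ℤ)
        + ∑ u ∈ Finset.univ.erase (Sum.inr e), ((blowKS k S u (Sum.inr e)) : ℤ)) else 0) = 0 := by
    intro e
    have hw : blowWS w S (Sum.inr e) = 0 := rfl
    rw [exc_nbr_sum k S hbrne e, blow_inr_inr, hw]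
    simp
  rw [Finset.sum_eq_zero (fun e _ => hzero e), add_zero]
  refine Finset.sum_congr rfl fun v hv => ?_
  have hw : blowWS w S (Sum.inl v) = w v := rfl
  rw [blow_loop k S hbrne, blow_nbr_sum_erase k S hsym hbrne hone hor v, hw]

end BlowAux


section DeltaAux
variable (k : V → V → ℕ) (S : Finset (V × V))

lemma ind_or_split (hor : ∀ p ∈ S, (p.2, p.1) ∉ S) (u v : V) :
    (if (u, v) ∈ S ∨ (v, u) ∈ S then (1:ℤ) else 0)
      = (if (u, v) ∈ S then (1:ℤ) else 0) + (if (v, u) ∈ S then 1 else 0) := by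
  by_cases h1 : (u,v) ∈ S
  · have h2 : (v,u) ∉ S := hor _ h1
    simp [h1, h2]
  · by_cases h2 : (v,u) ∈ S <;> simp [h1, h2]

lemma cross_count (hor : ∀ p ∈ S, (p.2, p.1) ∉ S) (B : Finset V) :
    ∑ u ∈ B, ∑ v ∈ Bᶜ, (if (u, v) ∈ S ∨ (v, u) ∈ S then (1:ℤ) else 0)
      = ∑ e : {p : V × V // p ∈ S},
          ((if e.1.1 ∈ B ∧ e.1.2 ∈ Bᶜ then (1:ℤ) else 0) +
           (if e.1.1 ∈ Bᶜ ∧ e.1.2 ∈ B then (1:ℤ) else 0)) := by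
  simp only [ind_or_split S hor, Finset.sum_add_distrib]
  congr 1
  · exact count_pairs S B Bᶜ
  · rw [Finset.sum_comm]
    exact count_pairs S Bᶜ B

lemma deltaA_hat (hsym : ∀ u v, k u v = k v u) (hbrne : ∀ p ∈ S, p.1 ≠ p.2)
    (hone : ∀ p ∈ S, k p.1 p.2 = 1) (hor : ∀ p ∈ S, (p.2, p.1) ∉ S)
    (σ : {p : V × V // p ∈ S} → V) (hσ : ∀ e, σ e = e.1.1 ∨ σ e = e.1.2) (B : Finset V) :
    deltaA (blowKS k S) (hatS S σ B) = deltaA k B := by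
  rw [deltaA, compl_hatS, sum_hatS]
  have e1 : ∀ u ∈ B, (∑ y ∈ hatS S σ Bᶜ, (blowKS k S (Sum.inl u) y : ℤ))
      = ((∑ v ∈ Bᶜ, (k u v : ℤ)) - ∑ v ∈ Bᶜ, (if (u,v) ∈ S ∨ (v,u) ∈ S then (1:ℤ) else 0))
        + ∑ e : {p : V × V // p ∈ S},
            (if σ e ∈ Bᶜ then (if u = e.1.1 ∨ u = e.1.2 then (1:ℤ) else 0) else 0) := by
    intro u _
    rw [sum_hatS]
    congr 1
    · rw [← Finset.sum_sub_distrib]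
      exact Finset.sum_congr rfl fun v _ => blow_inl_inl_cast k S hsym hone u v
    · refine Finset.sum_congr rfl fun e _ => ?_
      by_cases h : σ e ∈ Bᶜ
      · rw [if_pos h, if_pos h, blow_inl_inr_cast]
      · rw [if_neg h, if_neg h]
  have e2 : ∀ e : {p : V × V // p ∈ S}, (∑ y ∈ hatS S σ Bᶜ, (blowKS k S (Sum.inr e) y : ℤ))
      = (if e.1.1 ∈ Bᶜ then (1:ℤ) else 0) + (if e.1.2 ∈ Bᶜ then (1:ℤ) else 0) := by
    intro e
    rw [sum_hatS]
    have h1 : ∑ v ∈ Bᶜ, (blowKS k S (Sum.inr e) (Sum.inl v) : ℤ)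
        = (if e.1.1 ∈ Bᶜ then (1:ℤ) else 0) + (if e.1.2 ∈ Bᶜ then (1:ℤ) else 0) := by
      rw [Finset.sum_congr rfl (fun v (_ : v ∈ Bᶜ) => blow_inr_inl_cast k S e v),
        sum_ind_endpoints Bᶜ e.1.1 e.1.2 (hbrne _ e.2)]
    have h2 : ∑ e' : {p : V × V // p ∈ S},
        (if σ e' ∈ Bᶜ then (blowKS k S (Sum.inr e) (Sum.inr e') : ℤ) else 0) = 0 := by
      refine Finset.sum_eq_zero fun e' _ => ?_
      rw [blow_inr_inr]
      simp
    rw [h1, h2, add_zero]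
  have e3 : ∀ e : {p : V × V // p ∈ S},
      (if σ e ∈ B then (∑ y ∈ hatS S σ Bᶜ, (blowKS k S (Sum.inr e) y : ℤ)) else 0)
      = (if σ e ∈ B then ((if e.1.1 ∈ Bᶜ then (1:ℤ) else 0) + (if e.1.2 ∈ Bᶜ then 1 else 0)) else 0) :=
    fun e => by rw [e2 e]
  rw [Finset.sum_congr rfl e1, Finset.sum_congr rfl (fun e _ => e3 e),
    Finset.sum_add_distrib, Finset.sum_sub_distrib]
  have hA2 := cross_count S hor B
  have hA3 : ∑ u ∈ B, ∑ e : {p : V × V // p ∈ S},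
      (if σ e ∈ Bᶜ then (if u = e.1.1 ∨ u = e.1.2 then (1:ℤ) else 0) else 0)
      = ∑ e : {p : V × V // p ∈ S},
        (if σ e ∈ Bᶜ then ((if e.1.1 ∈ B then (1:ℤ) else 0) + (if e.1.2 ∈ B then 1 else 0)) else 0) := by
    rw [Finset.sum_comm]
    refine Finset.sum_congr rfl fun e _ => ?_
    by_cases h : σ e ∈ Bᶜ
    · simp only [if_pos h]
      exact sum_ind_endpoints B e.1.1 e.1.2 (hbrne _ e.2)
    · simp only [if_neg h]
      exact Finset.sum_const_zero
  have key : ∑ e : {p : V × V // p ∈ S},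
        (if σ e ∈ Bᶜ then ((if e.1.1 ∈ B then (1:ℤ) else 0) + (if e.1.2 ∈ B then 1 else 0)) else 0)
      + ∑ e : {p : V × V // p ∈ S},
        (if σ e ∈ B then ((if e.1.1 ∈ Bᶜ then (1:ℤ) else 0) + (if e.1.2 ∈ Bᶜ then 1 else 0)) else 0)
      = ∑ e : {p : V × V // p ∈ S},
          ((if e.1.1 ∈ B ∧ e.1.2 ∈ Bᶜ then (1:ℤ) else 0) +
           (if e.1.1 ∈ Bᶜ ∧ e.1.2 ∈ B then (1:ℤ) else 0)) := by
    rw [← Finset.sum_add_distrib]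
    refine Finset.sum_congr rfl fun e _ => ?_
    rcases hσ e with h | h <;> rw [h] <;>
      by_cases h1 : e.1.1 ∈ B <;> by_cases h2 : e.1.2 ∈ B <;>
        simp [h1, h2, Finset.mem_compl]
  have hdel : ∑ u ∈ B, ∑ v ∈ Bᶜ, (k u v : ℤ) = deltaA k B := rfl
  rw [hA3]
  linarith [hA2, key, hdel]

end DeltaAux


section GenusAux
variable (k : V → V → ℕ) (w : V → ℕ) (S : Finset (V × V))

lemma genus_blow (hsym : ∀ u v, k u v = k v u) (hbrne : ∀ p ∈ S, p.1 ≠ p.2)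
    (hone : ∀ p ∈ S, k p.1 p.2 = 1) (hor : ∀ p ∈ S, (p.2, p.1) ∉ S) :
    genus (blowKS k S) (blowWS w S) = genus k w := by
  have hw : ∑ x : V ⊕ {p : V × V // p ∈ S}, ((blowWS w S x : ℕ) : ℤ) = ∑ v : V, (w v : ℤ) := by
    rw [Fintype.sum_sum_type]
    have h1 : ∀ v : V, blowWS w S (Sum.inl v) = w v := fun _ => rfl
    have h2 : ∀ e : {p : V × V // p ∈ S}, blowWS w S (Sum.inr e) = 0 := fun _ => rfl
    simp [h1, h2]
  have hL : ∑ x : V ⊕ {p : V × V // p ∈ S}, blowKS k S x x = ∑ v : V, k v v := by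
    rw [Fintype.sum_sum_type, Finset.sum_congr rfl (fun v (_ : v ∈ Finset.univ) => blow_loop k S hbrne v)]
    simp [blow_inr_inr]
  have hTZ : (∑ x : V ⊕ {p : V × V // p ∈ S}, ∑ y ∈ Finset.univ.erase x, (blowKS k S x y : ℤ))
      = (∑ u : V, ∑ v ∈ Finset.univ.erase u, (k u v : ℤ))
        + 2 * (Fintype.card {p : V × V // p ∈ S} : ℤ) := by
    rw [Fintype.sum_sum_type]
    have hinl : ∀ u : V, ∑ y ∈ Finset.univ.erase (Sum.inl u), (blowKS k S (Sum.inl u) y : ℤ)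
        = ∑ v ∈ Finset.univ.erase u, (k u v : ℤ) := by
      intro u
      have h1 := Finset.sum_erase_add Finset.univ
        (fun y => (blowKS k S (Sum.inl u) y : ℤ)) (Finset.mem_univ (Sum.inl u))
      have h2 := Finset.sum_erase_add Finset.univ (fun v => (k u v : ℤ)) (Finset.mem_univ u)
      have h3 := blow_nbr_sum_fst k S hsym hbrne hone hor u
      have h4 : (blowKS k S (Sum.inl u) (Sum.inl u) : ℤ) = (k u u : ℤ) := by
        rw [blow_loop k S hbrne]
      linarith
    have hinr : ∀ e : {p : V × V // p ∈ S},
        ∑ y ∈ Finset.univ.erase (Sum.inr e), (blowKS k S (Sum.inr e) y : ℤ) = 2 := by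
      intro e
      have h1 := Finset.sum_erase_add Finset.univ
        (fun y => (blowKS k S (Sum.inr e) y : ℤ)) (Finset.mem_univ (Sum.inr e))
      have h2 : ∑ y : V ⊕ {p : V × V // p ∈ S}, (blowKS k S (Sum.inr e) y : ℤ) = 2 := by
        rw [Fintype.sum_sum_type]
        simp only [blow_inr_inl_cast, blow_inr_inr]
        rw [sum_ind_endpoints_univ e.1.1 e.1.2 (hbrne _ e.2)]
        simp
      have h3 : (blowKS k S (Sum.inr e) (Sum.inr e) : ℤ) = 0 := by rw [blow_inr_inr]; rfl
      linarith
    rw [Finset.sum_congr rfl (fun u (_ : u ∈ Finset.univ) => hinl u),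
      Finset.sum_congr rfl (fun e (_ : e ∈ Finset.univ) => hinr e),
      Finset.sum_const, Finset.card_univ]
    simp [nsmul_eq_mul]
    ring
  have hTnat : (∑ x : V ⊕ {p : V × V // p ∈ S}, ∑ y ∈ Finset.univ.erase x, blowKS k S x y)
      = (∑ u : V, ∑ v ∈ Finset.univ.erase u, k u v) + 2 * Fintype.card {p : V × V // p ∈ S} := by
    exact_mod_cast hTZ
  have hNE : numEdges (blowKS k S) = numEdges k + Fintype.card {p : V × V // p ∈ S} := by
    rw [numEdges, numEdges, hL, hTnat, mul_comm 2 (Fintype.card {p : V × V // p ∈ S}),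
      Nat.add_mul_div_right _ _ (by norm_num : (0:ℕ) < 2)]
    ring
  rw [genus, genus, hNE, hw, Fintype.card_sum]
  push_cast
  ring

lemma wA_univ (hsym : ∀ u v, k u v = k v u) :
    wA k w Finset.univ = 2 * genus k w - 2 := by
  obtain ⟨c, hc⟩ := aux_offdiag_even k hsym
  have hT2 : (∑ u : V, ∑ v ∈ Finset.univ.erase u, k u v) / 2 = c := by omega
  have hTz : ∑ v : V, ∑ u ∈ Finset.univ.erase v, (k u v : ℤ)
      = ((∑ u : V, ∑ v ∈ Finset.univ.erase u, k u v : ℕ) : ℤ) := by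
    rw [Finset.sum_congr rfl (fun v (_ : v ∈ Finset.univ) =>
      Finset.sum_congr rfl (fun u _ => by rw [hsym u v]))]
    push_cast
    rfl
  have hwa : wA k w Finset.univ = 2 * (∑ v : V, (w v : ℤ)) - 2 * (Fintype.card V : ℤ)
      + 2 * (∑ v : V, (k v v : ℤ)) + ∑ v : V, ∑ u ∈ Finset.univ.erase v, (k u v : ℤ) := by
    rw [wA]
    simp only [Finset.sum_add_distrib, Finset.sum_sub_distrib, ← Finset.mul_sum,
      Finset.sum_const, Finset.card_univ, smul_eq_mul]
    ring
  have hne : (numEdges k : ℤ) = (∑ v : V, (k v v : ℤ)) + (c : ℤ) := by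
    rw [numEdges, hT2]; push_cast; ring
  rw [hwa, genus, hne, hTz, hc]
  push_cast
  ring

lemma mA_hat (hsym : ∀ u v, k u v = k v u) (hbrne : ∀ p ∈ S, p.1 ≠ p.2)
    (hone : ∀ p ∈ S, k p.1 p.2 = 1) (hor : ∀ p ∈ S, (p.2, p.1) ∉ S)
    (D : ℤ) (σ : {p : V × V // p ∈ S} → V) (hσ : ∀ e, σ e = e.1.1 ∨ σ e = e.1.2) (B : Finset V) :
    mA (blowKS k S) (blowWS w S) D (hatS S σ B) = mA k w D B := by
  rw [mA, mA, genus_blow k w S hsym hbrne hone hor, wA_hat k w S hsym hbrne hone hor σ B,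
    deltaA_hat k S hsym hbrne hone hor σ hσ B]

end GenusAux


section BridgeAux
variable (k : V → V → ℕ)

lemma bridge_side (hsym : ∀ u v, k u v = k v u) (hconn : (graphOf k).Connected)
    {a b : V} (hbr : IsBridge k a b) :
    ∃ A : Finset V, a ∈ A ∧ b ∉ A ∧
      ∀ u v : V, u ∈ A → v ∉ A → k u v ≠ 0 → u = a ∧ v = b := by
  classical
  set G' := graphOf (removeEdge k a b) with hG'
  set A : Finset V := Finset.univ.filter (fun v => G'.Reachable a v) with hA
  have hmem : ∀ v : V, v ∈ A ↔ G'.Reachable a v := by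
    intro v; simp [hA]
  have haA : a ∈ A := (hmem a).2 (SimpleGraph.Reachable.refl a)
  have hbA : b ∉ A := by
    intro hbmem
    have hreach : G'.Reachable a b := (hmem b).1 hbmem
    apply hbr.2.2
    rw [SimpleGraph.connected_iff]
    have hall : ∀ v : V, G'.Reachable a v := by
      intro v
      refine aux_reach_mono (graphOf k) G' ?_ (hconn.preconnected a v)
      intro x y hxy
      obtain ⟨hne, hpos⟩ := (show x ≠ y ∧ (0 < k x y ∨ 0 < k y x) from hxy)
      by_cases hc : (x = a ∧ y = b) ∨ (x = b ∧ y = a)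
      · rcases hc with ⟨hx, hy⟩ | ⟨hx, hy⟩
        · subst hx; subst hy; exact hreach
        · subst hx; subst hy; exact hreach.symm
      · refine SimpleGraph.Adj.reachable ?_
        have h1 : removeEdge k a b x y = k x y := by
          rw [removeEdge, if_neg hc]
        have h2 : removeEdge k a b y x = k y x := by
          rw [removeEdge, if_neg]
          rintro (⟨hy, hx⟩ | ⟨hy, hx⟩)
          · exact hc (Or.inr ⟨hx, hy⟩)
          · exact hc (Or.inl ⟨hx, hy⟩)
        exact (show x ≠ y ∧ (0 < removeEdge k a b x y ∨ 0 < removeEdge k a b y x) from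
          ⟨hne, by rw [h1, h2]; exact hpos⟩)
    exact ⟨fun u v => (hall u).symm.trans (hall v), ⟨a⟩⟩
  refine ⟨A, haA, hbA, ?_⟩
  intro u v hu hv hk
  have hre : removeEdge k a b u v = 0 := by
    by_contra hne0
    apply hv
    refine (hmem v).2 (((hmem u).1 hu).trans (SimpleGraph.Adj.reachable ?_))
    exact (show u ≠ v ∧ (0 < removeEdge k a b u v ∨ 0 < removeEdge k a b v u) from
      ⟨fun h => hv (h ▸ hu), Or.inl (Nat.pos_of_ne_zero hne0)⟩)
  rw [removeEdge] at hre
  by_cases hc : (u = a ∧ v = b) ∨ (u = b ∧ v = a)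
  · rcases hc with ⟨h1, h2⟩ | ⟨h1, h2⟩
    · exact ⟨h1, h2⟩
    · exact absurd (h1 ▸ hu) hbA
  · rw [if_neg hc] at hre
    exact absurd hre hk

lemma deltaA_side {a b : V} (hone : k a b = 1) (A : Finset V)
    (ha : a ∈ A) (hb : b ∉ A)
    (hcross : ∀ u v : V, u ∈ A → v ∉ A → k u v ≠ 0 → u = a ∧ v = b) :
    deltaA k A = 1 := by
  rw [deltaA, Finset.sum_eq_single a]
  · rw [Finset.sum_eq_single b]
    · exact_mod_cast congrArg (Nat.cast : ℕ → ℤ) hone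
    · intro v hv hvb
      have hv' : v ∉ A := Finset.mem_compl.1 hv
      have : k a v = 0 := by
        by_contra hk
        exact hvb (hcross a v ha hv' hk).2
      rw [this]; rfl
    · intro hbc
      exact absurd (Finset.mem_compl.2 hb) hbc
  · intro u hu hua
    refine Finset.sum_eq_zero fun v hv => ?_
    have : k u v = 0 := by
      by_contra hk
      exact hua (hcross u v hu (Finset.mem_compl.1 hv) hk).1
    rw [this]; rfl
  · intro h; exact absurd ha h

lemma deltaA_compl (hsym : ∀ u v, k u v = k v u) (A : Finset V) :
    deltaA k Aᶜ = deltaA k A := by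
  rw [deltaA, deltaA, compl_compl, Finset.sum_comm]
  exact Finset.sum_congr rfl fun v _ => Finset.sum_congr rfl fun u _ => by rw [hsym]

lemma wA_add_compl (w : V → ℕ) (A : Finset V) :
    wA k w A + wA k w Aᶜ = wA k w Finset.univ := by
  rw [wA, wA, wA]
  exact Finset.sum_add_sum_compl A _

end BridgeAux

section DegAux
variable (S : Finset (V × V))

lemma degA_hat (dh : (V ⊕ {p : V × V // p ∈ S}) → ℤ)
    (hexc : ∀ e : {p : V × V // p ∈ S}, dh (Sum.inr e) = 1)
    (σ : {p : V × V // p ∈ S} → V) (B : Finset V) :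
    degA dh (hatS S σ B) = (∑ v ∈ B, dh (Sum.inl v))
      + ∑ e : {p : V × V // p ∈ S}, (if σ e ∈ B then (1:ℤ) else 0) := by
  rw [degA, sum_hatS]
  congr 1
  refine Finset.sum_congr rfl fun e _ => ?_
  by_cases h : σ e ∈ B
  · rw [if_pos h, if_pos h, hexc]
  · rw [if_neg h, if_neg h]

lemma degA_push (dh : (V ⊕ {p : V × V // p ∈ S}) → ℤ) (B : Finset V) :
    degA (fun v => dh (Sum.inl v)
        + ∑ e : {p : V × V // p ∈ S}, (if e.1.1 = v then (1:ℤ) else 0)) B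
      = (∑ v ∈ B, dh (Sum.inl v))
        + ∑ e : {p : V × V // p ∈ S}, (if e.1.1 ∈ B then (1:ℤ) else 0) := by
  rw [degA, Finset.sum_add_distrib]
  congr 1
  rw [Finset.sum_comm]
  exact Finset.sum_congr rfl fun e _ => Finset.sum_ite_eq B e.1.1 (fun _ => (1:ℤ))

end DegAux


/-- If `(Γ,w)` is `d`-general and `S` is a nonempty set of
bridges, then the blow-up `Γ̂_S` admits no strictly balanced multidegree of
total degree `d`: `B_d(Γ̂_S) = ∅`. -/
theorem stmt18 (V : Type) [Fintype V] [DecidableEq V] (k : V → V → ℕ) (w : V → ℕ)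
    (hsym : ∀ u v, k u v = k v u) (hstab : IsStable k w) (hg : 2 ≤ genus k w)
    (D : ℤ) (hgen : IsDGeneral k w D)
    (S : Finset (V × V)) (hS : S.Nonempty)
    (hbridges : ∀ p ∈ S, IsBridge k p.1 p.2)
    (hor : ∀ p ∈ S, (p.2, p.1) ∉ S) :
    ¬ ∃ dh : (V ⊕ {p : V × V // p ∈ S}) → ℤ, IsStrictlyBalancedBlowS k w S D dh := by
  rintro ⟨dh, hbal, hexc, -⟩
  have hbrne : ∀ p ∈ S, p.1 ≠ p.2 := fun p hp => (hbridges p hp).1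
  have hone : ∀ p ∈ S, k p.1 p.2 = 1 := fun p hp => (hbridges p hp).2.1
  set d : V → ℤ := fun v => dh (Sum.inl v)
      + ∑ e : {p : V × V // p ∈ S}, (if e.1.1 = v then (1:ℤ) else 0) with hd
  have hdeg1 : ∀ B : Finset V, degA d B = degA dh (hatS S (fun e => e.1.1) B) := by
    intro B
    rw [hd, degA_push S dh B, degA_hat S dh hexc (fun e => e.1.1) B]
  have hbalanced : IsBalanced k w D d := by
    constructor
    · rw [hdeg1 Finset.univ, hatS_univ]
      exact hbal.1
    · intro B
      have h1 := hbal.2 (hatS S (fun e => e.1.1) B)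
      rw [mA_hat k w S hsym hbrne hone hor D (fun e => e.1.1) (fun e => Or.inl rfl) B] at h1
      rw [hdeg1 B]
      exact h1
  have hstrict := hgen d hbalanced
  obtain ⟨p₀, hp₀⟩ := hS
  obtain ⟨A, haA, hbA, hcross⟩ := bridge_side k hsym hstab.1 (hbridges p₀ hp₀)
  have hδA : deltaA k A = 1 := deltaA_side k (hone p₀ hp₀) A haA hbA hcross
  have hδAc : deltaA k Aᶜ = 1 := by rw [deltaA_compl k hsym A]; exact hδA
  set e₀ : {p : V × V // p ∈ S} := ⟨p₀, hp₀⟩ with he₀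
  have hsame : ∀ e : {p : V × V // p ∈ S}, e ≠ e₀ → ((e.1.1 ∈ A) ↔ (e.1.2 ∈ A)) := by
    intro e hne0
    have hb1 : k e.1.1 e.1.2 = 1 := hone _ e.2
    constructor
    · intro h1
      by_contra h2
      have hcr := hcross e.1.1 e.1.2 h1 h2 (by rw [hb1]; omega)
      exact hne0 (Subtype.ext (Prod.ext hcr.1 hcr.2))
    · intro h2
      by_contra h1
      have hcr := hcross e.1.2 e.1.1 h2 h1 (by rw [hsym, hb1]; omega)
      apply hor p₀ hp₀
      have heq : (e : V × V) = (p₀.2, p₀.1) := Prod.ext hcr.2 hcr.1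
      rw [← heq]
      exact e.2
  have hcount : (∑ e : {p : V × V // p ∈ S}, (if e.1.1 ∈ A then (1:ℤ) else 0))
      = (∑ e : {p : V × V // p ∈ S}, (if e.1.2 ∈ A then (1:ℤ) else 0)) + 1 := by
    rw [Finset.sum_eq_sum_sdiff_singleton_add (Finset.mem_univ e₀)
      (fun e => (if e.1.1 ∈ A then (1:ℤ) else 0)),
      Finset.sum_eq_sum_sdiff_singleton_add (Finset.mem_univ e₀)
      (fun e => (if e.1.2 ∈ A then (1:ℤ) else 0))]
    have h1 : (if (e₀ : V × V).1 ∈ A then (1:ℤ) else 0) = 1 := if_pos haA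
    have h2 : (if (e₀ : V × V).2 ∈ A then (1:ℤ) else 0) = 0 := if_neg hbA
    rw [h1, h2]
    have h3 : ∑ e ∈ Finset.univ \ {e₀}, (if (e : V × V).1 ∈ A then (1:ℤ) else 0)
        = ∑ e ∈ Finset.univ \ {e₀}, (if (e : V × V).2 ∈ A then (1:ℤ) else 0) := by
      refine Finset.sum_congr rfl fun e he => ?_
      have hne0 : e ≠ e₀ := by
        simp only [Finset.mem_sdiff, Finset.mem_singleton] at he
        exact he.2
      by_cases h : e.1.1 ∈ A
      · rw [if_pos h, if_pos ((hsame e hne0).1 h)]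
      · rw [if_neg h, if_neg (fun hh => h ((hsame e hne0).2 hh))]
    rw [h3]
    ring
  have h2 := hbal.2 (hatS S (fun e => e.1.2) A)
  rw [mA_hat k w S hsym hbrne hone hor D (fun e => e.1.2) (fun e => Or.inr rfl) A] at h2
  have hdeghat2 : degA dh (hatS S (fun e => e.1.2) A) = degA d A - 1 := by
    rw [degA_hat S dh hexc (fun e => e.1.2) A, hdeg1 A, degA_hat S dh hexc (fun e => e.1.1) A]
    have := hcount
    linarith
  have hAne : Aᶜ ≠ ∅ := by
    intro h
    have hbm : p₀.2 ∈ Aᶜ := Finset.mem_compl.2 hbA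
    rw [h] at hbm
    exact absurd hbm (Finset.notMem_empty _)
  have hAnu : Aᶜ ≠ Finset.univ := by
    intro h
    have ham : p₀.1 ∈ Aᶜ := h ▸ Finset.mem_univ _
    exact absurd haA (Finset.mem_compl.1 ham)
  have h3 := hstrict.2 Aᶜ hAne hAnu
  have hg2 : ((2 * genus k w - 2 : ℤ) : ℚ) ≠ 0 := by
    have : (2 * genus k w - 2 : ℤ) ≠ 0 := by omega
    exact_mod_cast this
  have hwsum : (wA k w A : ℚ) + (wA k w Aᶜ : ℚ) = ((2 * genus k w - 2 : ℤ) : ℚ) := by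
    have h := wA_add_compl k w A
    rw [wA_univ k w hsym] at h
    exact_mod_cast h
  have hmsum : mA k w D A + mA k w D Aᶜ = (D : ℚ) - 1 := by
    rw [mA, mA, hδA, hδAc]
    have expand : (D:ℚ) * (wA k w A : ℚ) / ((2 * genus k w - 2 : ℤ) : ℚ)
          - ((1 : ℤ) : ℚ) / 2
        + ((D:ℚ) * (wA k w Aᶜ : ℚ) / ((2 * genus k w - 2 : ℤ) : ℚ) - ((1 : ℤ) : ℚ) / 2)
        = (D:ℚ) * ((wA k w A : ℚ) + (wA k w Aᶜ : ℚ)) / ((2 * genus k w - 2 : ℤ) : ℚ) - 1 := by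
      push_cast
      ring
    rw [expand, hwsum, mul_div_assoc, div_self hg2, mul_one]
  have hdegsum : degA d A + degA d Aᶜ = D := by
    rw [← hbalanced.1, degA, degA, degA]
    exact Finset.sum_add_sum_compl A d
  have hA_ineq : mA k w D A ≤ (degA d A : ℚ) - 1 := by
    calc mA k w D A ≤ (degA dh (hatS S (fun e => e.1.2) A) : ℚ) := h2
    _ = ((degA d A - 1 : ℤ) : ℚ) := by rw [hdeghat2]
    _ = (degA d A : ℚ) - 1 := by push_cast; ring
  have hcast : ((degA d A : ℤ) : ℚ) + ((degA d Aᶜ : ℤ) : ℚ) = (D : ℚ) := by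
    exact_mod_cast hdegsum
  linarith [h3, hA_ineq, hmsum, hcast]
end
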